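/- Let A be an ℕ-graded commutative ring generated over A_0 by nonzerodivisors t_1, …, t_n of degree 1, and let R = A[u_1, …, u_n, x_1, …, x_n]/(u_1 x_1 − t_1, …, u_n x_n − t_n). Let m_1, …, m_n be positive integers and f ∈ A homogeneous of degree r. If k_1, …, k_n are positive integers with k_i + m_i > r for all i, then (x_1^{m_1+k_1}, …, x_n^{m_n+k_n}, u_1^{m_1+k_1}, …, u_n^{m_n+k_n}) R :_{A_0} (f x_1^{k_1} ⋯ x_n^{k_n}) = (t_1^{m_1}, …, t_n^{m_n}) A :_{A_0} f. -/

import Mathlib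

open MvPolynomial

section Aux
variable {A : Type*} [CommRing A] (𝒜 : ℕ → AddSubgroup A) [GradedRing 𝒜]

lemma decompose_mul_deg_one (tt : A) (htt : tt ∈ 𝒜 1) (p : A) (s : ℕ) :
    (DirectSum.decompose 𝒜 (p * tt) (s + 1) : A) = (DirectSum.decompose 𝒜 p s : A) * tt := by
  induction p using DirectSum.Decomposition.inductionOn 𝒜 with
  | zero => simp
  | @homogeneous j q =>
    have hq : (q : A) * tt ∈ 𝒜 (j + 1) := SetLike.mul_mem_graded q.2 htt
    by_cases hj : j = s
    · subst hj
      rw [DirectSum.decompose_of_mem_same 𝒜 hq, DirectSum.decompose_of_mem_same 𝒜 q.2]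
    · rw [DirectSum.decompose_of_mem_ne 𝒜 hq (by omega),
        DirectSum.decompose_of_mem_ne 𝒜 q.2 hj, zero_mul]
  | add p q hp hq =>
    rw [add_mul]
    simp only [DirectSum.decompose_add, DirectSum.add_apply, AddSubgroup.coe_add]
    rw [hp, hq, add_mul]

lemma decompose_mul_deg_one_zero (tt : A) (htt : tt ∈ 𝒜 1) (p : A) :
    (DirectSum.decompose 𝒜 (p * tt) 0 : A) = 0 := by
  induction p using DirectSum.Decomposition.inductionOn 𝒜 with
  | zero => simp
  | @homogeneous j q =>
    have hq : (q : A) * tt ∈ 𝒜 (j + 1) := SetLike.mul_mem_graded q.2 htt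
    rw [DirectSum.decompose_of_mem_ne 𝒜 hq (by omega)]
  | add p q hp hq =>
    rw [add_mul]
    simp only [DirectSum.decompose_add, DirectSum.add_apply, AddSubgroup.coe_add]
    rw [hp, hq, add_zero]

noncomputable def projZ (s : ℤ) (p : A) : A :=
  if 0 ≤ s then (DirectSum.decompose 𝒜 p s.toNat : A) else 0

lemma projZ_zero (s : ℤ) : projZ 𝒜 s (0 : A) = 0 := by simp [projZ]

lemma projZ_add (s : ℤ) (p q : A) : projZ 𝒜 s (p + q) = projZ 𝒜 s p + projZ 𝒜 s q := by
  simp only [projZ]; split <;> simp [DirectSum.decompose_add, DirectSum.add_apply]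

lemma projZ_neg_deg (s : ℤ) (hs : s < 0) (p : A) : projZ 𝒜 s p = 0 := by
  simp [projZ, not_le.mpr hs]

lemma projZ_mul_deg_one (tt : A) (htt : tt ∈ 𝒜 1) (s : ℤ) (p : A) :
    projZ 𝒜 s (p * tt) = projZ 𝒜 (s - 1) p * tt := by
  rcases lt_trichotomy s 0 with h | h | h
  · rw [projZ_neg_deg 𝒜 s h, projZ_neg_deg 𝒜 (s-1) (by omega), zero_mul]
  · subst h
    rw [projZ_neg_deg 𝒜 ((0:ℤ)-1) (by norm_num), zero_mul]
    simpa [projZ] using decompose_mul_deg_one_zero 𝒜 tt htt p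
  · have h1 : (0:ℤ) ≤ s := le_of_lt h
    have h2 : (0:ℤ) ≤ s - 1 := by omega
    have h3 : s.toNat = (s-1).toNat + 1 := by omega
    simp only [projZ, if_pos h1, if_pos h2]
    rw [h3]
    exact decompose_mul_deg_one 𝒜 tt htt p _

lemma projZ_of_mem (p : A) (s : ℕ) (hp : p ∈ 𝒜 s) : projZ 𝒜 (s : ℤ) p = p := by
  simp [projZ, DirectSum.decompose_of_mem_same 𝒜 hp]

variable {n : ℕ} (t : Fin n → A) (kk m : Fin n → ℕ) (r : ℕ)

noncomputable def sval (d : (Fin n ⊕ Fin n) →₀ ℕ) (p : A) : A :=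
  if ∀ i, d (Sum.inr i) = d (Sum.inl i) + kk i then
    projZ 𝒜 ((r : ℤ) - ∑ i, (d (Sum.inl i) : ℤ)) p * ∏ i, t i ^ d (Sum.inl i)
  else 0

lemma sval_zero (d : (Fin n ⊕ Fin n) →₀ ℕ) : sval 𝒜 t kk r d (0:A) = 0 := by
  simp [sval, projZ_zero]

lemma sval_add (d : (Fin n ⊕ Fin n) →₀ ℕ) (p q : A) :
    sval 𝒜 t kk r d (p + q) = sval 𝒜 t kk r d p + sval 𝒜 t kk r d q := by
  simp only [sval]; split
  · rw [projZ_add, add_mul]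
  · rw [add_zero]

noncomputable def phi (P : MvPolynomial (Fin n ⊕ Fin n) A) : A :=
  Finsupp.sum (AddMonoidAlgebra.coeff P) (fun d p => sval 𝒜 t kk r d p)

lemma phi_monomial (d : (Fin n ⊕ Fin n) →₀ ℕ) (p : A) :
    phi 𝒜 t kk r (monomial d p) = sval 𝒜 t kk r d p :=
  sum_monomial_eq (sval_zero 𝒜 t kk r d)

lemma phi_add (P Q : MvPolynomial (Fin n ⊕ Fin n) A) :
    phi 𝒜 t kk r (P + Q) = phi 𝒜 t kk r P + phi 𝒜 t kk r Q :=
  Finsupp.sum_add_index' (sval_zero 𝒜 t kk r) (sval_add 𝒜 t kk r)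

lemma phi_zero : phi 𝒜 t kk r (0 : MvPolynomial (Fin n ⊕ Fin n) A) = 0 := by
  simp [phi]

lemma phi_sub (P Q : MvPolynomial (Fin n ⊕ Fin n) A) :
    phi 𝒜 t kk r (P - Q) = phi 𝒜 t kk r P - phi 𝒜 t kk r Q :=
  eq_sub_of_add_eq (by rw [← phi_add, sub_add_cancel])

-- claim 3 : x-generator
lemma sval_shift_inr (d : (Fin n ⊕ Fin n) →₀ ℕ) (p : A) (i : Fin n) :
    sval 𝒜 t kk r (d + Finsupp.single (Sum.inr i) (m i + kk i)) p ∈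
      Ideal.span (Set.range fun i : Fin n => t i ^ m i) := by
  rw [sval]
  split
  · next hc =>
    have hinl : ∀ j, (d + Finsupp.single (Sum.inr i) (m i + kk i) : (Fin n ⊕ Fin n) →₀ ℕ)
        (Sum.inl j) = d (Sum.inl j) := by
      intro j; simp [Finsupp.single_apply]
    have hi : d (Sum.inl i) = d (Sum.inr i) + m i := by
      have h2 := hc i
      rw [hinl i] at h2
      simp [Finsupp.single_apply] at h2
      omega
    simp only [hinl]
    have hprod : ∏ j, t j ^ d (Sum.inl j)
        = (t i ^ d (Sum.inr i) * ∏ j ∈ Finset.univ.erase i, t j ^ d (Sum.inl j)) * t i ^ m i := by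
      rw [← Finset.mul_prod_erase Finset.univ _ (Finset.mem_univ i), hi, pow_add]
      ring
    rw [hprod, ← mul_assoc]
    exact Ideal.mul_mem_left _ _ (Ideal.subset_span ⟨i, rfl⟩)
  · exact zero_mem _

-- claim 4 : u-generator
lemma sval_shift_inl (d : (Fin n ⊕ Fin n) →₀ ℕ) (p : A) (i : Fin n) (hr : r < m i + kk i) :
    sval 𝒜 t kk r (d + Finsupp.single (Sum.inl i) (m i + kk i)) p = 0 := by
  rw [sval]
  split
  · set e := (d + Finsupp.single (Sum.inl i) (m i + kk i) : (Fin n ⊕ Fin n) →₀ ℕ) with he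
    have hsum : (r : ℤ) - ∑ j, (e (Sum.inl j) : ℤ) < 0 := by
      have h1 : (e (Sum.inl i) : ℤ) ≤ ∑ j, (e (Sum.inl j) : ℤ) :=
        Finset.single_le_sum (f := fun j => (e (Sum.inl j) : ℤ))
          (fun j _ => by positivity) (Finset.mem_univ i)
      have h2 : e (Sum.inl i) = d (Sum.inl i) + (m i + kk i) := by
        simp [he, Finsupp.single_apply]
      omega
    rw [projZ_neg_deg 𝒜 _ hsum, zero_mul]
  · rfl

-- claim 5 : relation
lemma sval_shift_rel (ht : ∀ i, t i ∈ 𝒜 1) (d : (Fin n ⊕ Fin n) →₀ ℕ) (p : A) (i : Fin n) :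
    sval 𝒜 t kk r (d + Finsupp.single (Sum.inl i) 1 + Finsupp.single (Sum.inr i) 1) p
      = sval 𝒜 t kk r d (p * t i) := by
  set e := (d + Finsupp.single (Sum.inl i) 1 + Finsupp.single (Sum.inr i) 1 :
    (Fin n ⊕ Fin n) →₀ ℕ) with he
  have hl : ∀ j, e (Sum.inl j) = d (Sum.inl j) + (if i = j then 1 else 0) := by
    intro j; simp [he, Finsupp.single_apply]
  have hr' : ∀ j, e (Sum.inr j) = d (Sum.inr j) + (if i = j then 1 else 0) := by
    intro j; simp [he, Finsupp.single_apply]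
  have hcond : (∀ j, e (Sum.inr j) = e (Sum.inl j) + kk j) ↔
      (∀ j, d (Sum.inr j) = d (Sum.inl j) + kk j) := by
    refine forall_congr' fun j => ?_
    rw [hl j, hr' j]; omega
  rw [sval, sval]
  by_cases hcd : ∀ j, d (Sum.inr j) = d (Sum.inl j) + kk j
  · rw [if_pos (hcond.mpr hcd), if_pos hcd]
    have hsum : ∑ j, (e (Sum.inl j) : ℤ) = (∑ j, (d (Sum.inl j) : ℤ)) + 1 := by
      simp only [hl]
      push_cast
      rw [Finset.sum_add_distrib]
      simp
    have hprod : ∏ j, t j ^ e (Sum.inl j) = t i * ∏ j, t j ^ d (Sum.inl j) := by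
      calc ∏ j, t j ^ e (Sum.inl j)
          = ∏ j, (t j ^ (if i = j then 1 else 0) * t j ^ d (Sum.inl j)) := by
            refine Finset.prod_congr rfl fun j _ => ?_
            rw [hl j, pow_add]; ring
        _ = (∏ j, t j ^ (if i = j then 1 else 0)) * ∏ j, t j ^ d (Sum.inl j) :=
            Finset.prod_mul_distrib
        _ = t i * ∏ j, t j ^ d (Sum.inl j) := by
            congr 1
            simp [pow_ite, Finset.prod_ite_eq]
    rw [projZ_mul_deg_one 𝒜 (t i) (ht i), hsum, hprod]
    have harith : (r : ℤ) - ((∑ j, (d (Sum.inl j) : ℤ)) + 1)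
        = ((r : ℤ) - ∑ j, (d (Sum.inl j) : ℤ)) - 1 := by ring
    rw [harith]; ring
  · rw [if_neg (fun hh => hcd (hcond.mp hh)), if_neg hcd]

end Aux

section Poly
variable {A : Type*} [CommRing A] (𝒜 : ℕ → AddSubgroup A) [GradedRing 𝒜]
variable {n : ℕ} (t : Fin n → A) (kk m : Fin n → ℕ) (r : ℕ)

lemma phi_mul_X_inr (P : MvPolynomial (Fin n ⊕ Fin n) A) (i : Fin n) :
    phi 𝒜 t kk r (P * X (Sum.inr i) ^ (m i + kk i)) ∈
      Ideal.span (Set.range fun i : Fin n => t i ^ m i) := by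
  induction P using MvPolynomial.induction_on' with
  | monomial d p =>
    rw [X_pow_eq_monomial, monomial_mul, mul_one, phi_monomial]
    exact sval_shift_inr 𝒜 t kk m r d p i
  | add p q hp hq =>
    rw [add_mul, phi_add]
    exact add_mem hp hq

lemma phi_mul_X_inl (P : MvPolynomial (Fin n ⊕ Fin n) A) (i : Fin n) (hr : r < m i + kk i) :
    phi 𝒜 t kk r (P * X (Sum.inl i) ^ (m i + kk i)) = 0 := by
  induction P using MvPolynomial.induction_on' with
  | monomial d p =>
    rw [X_pow_eq_monomial, monomial_mul, mul_one, phi_monomial]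
    exact sval_shift_inl 𝒜 t kk m r d p i hr
  | add p q hp hq =>
    rw [add_mul, phi_add, hp, hq, add_zero]

lemma phi_mul_rel (ht : ∀ i, t i ∈ 𝒜 1) (P : MvPolynomial (Fin n ⊕ Fin n) A) (i : Fin n) :
    phi 𝒜 t kk r (P * (X (Sum.inl i) * X (Sum.inr i) - C (t i))) = 0 := by
  induction P using MvPolynomial.induction_on' with
  | monomial d p =>
    have hX : (X (Sum.inl i) * X (Sum.inr i) : MvPolynomial (Fin n ⊕ Fin n) A)
        = monomial (Finsupp.single (Sum.inl i) 1 + Finsupp.single (Sum.inr i) 1) 1 := by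
      rw [← pow_one (X (Sum.inl i)), ← pow_one (X (Sum.inr i)),
        X_pow_eq_monomial, X_pow_eq_monomial, monomial_mul, mul_one]
    rw [mul_sub, hX, C_apply, monomial_mul, monomial_mul, mul_one, phi_sub,
      phi_monomial, phi_monomial, ← add_assoc]
    rw [sval_shift_rel 𝒜 t kk r ht d p i, add_zero, sub_self]
  | add p q hp hq =>
    rw [add_mul, phi_add, hp, hq, add_zero]

end Poly


/-- Let `A` be an `ℕ`-graded commutative ring generated over `A₀` by
nonzerodivisors `t₁, …, tₙ` of degree `1`, and
`R = A[u₁,…,uₙ,x₁,…,xₙ]/(u₁x₁ - t₁, …, uₙxₙ - tₙ)` (here `u_i = X (inl i)`,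
`x_i = X (inr i)`).  For positive integers `m_i`, `f ∈ A` homogeneous of degree `r`, and
positive integers `k_i` with `k_i + m_i > r`, one has
`(x₁^{m₁+k₁},…,xₙ^{mₙ+kₙ},u₁^{m₁+k₁},…,uₙ^{mₙ+kₙ})R :_{A₀} f x₁^{k₁}⋯xₙ^{kₙ}
  = (t₁^{m₁},…,tₙ^{mₙ})A :_{A₀} f`. -/
theorem stmt14 {A : Type*} [CommRing A] (𝒜 : ℕ → AddSubgroup A) [GradedRing 𝒜]
    (n : ℕ) (t : Fin n → A) (ht : ∀ i, t i ∈ 𝒜 1)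
    (htnzd : ∀ i, ∀ a : A, a * t i = 0 → a = 0)
    (hgen : Subring.closure ((𝒜 0 : Set A) ∪ Set.range t) = ⊤)
    (m kk : Fin n → ℕ) (hm : ∀ i, 1 ≤ m i) (hk : ∀ i, 1 ≤ kk i)
    (r : ℕ) (f : A) (hf : f ∈ 𝒜 r) (hkm : ∀ i, r < kk i + m i) :
    ∀ c ∈ 𝒜 0,
      (Ideal.Quotient.mk
          (Ideal.span (Set.range fun i : Fin n =>
            (X (Sum.inl i) * X (Sum.inr i) - C (t i) : MvPolynomial (Fin n ⊕ Fin n) A)))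
          (C c * C f * ∏ i : Fin n, X (Sum.inr i) ^ kk i) ∈
        Ideal.span
          ((Set.range fun i : Fin n => Ideal.Quotient.mk
              (Ideal.span (Set.range fun i : Fin n =>
                (X (Sum.inl i) * X (Sum.inr i) - C (t i) : MvPolynomial (Fin n ⊕ Fin n) A)))
              (X (Sum.inr i) ^ (m i + kk i))) ∪
            (Set.range fun i : Fin n => Ideal.Quotient.mk
              (Ideal.span (Set.range fun i : Fin n =>
                (X (Sum.inl i) * X (Sum.inr i) - C (t i) : MvPolynomial (Fin n ⊕ Fin n) A)))
              (X (Sum.inl i) ^ (m i + kk i)))))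
      ↔ c * f ∈ Ideal.span (Set.range fun i : Fin n => t i ^ m i) := by
  intro c hc
  set I : Ideal (MvPolynomial (Fin n ⊕ Fin n) A) := Ideal.span (Set.range fun i : Fin n =>
    (X (Sum.inl i) * X (Sum.inr i) - C (t i) : MvPolynomial (Fin n ⊕ Fin n) A)) with hI
  set mk := Ideal.Quotient.mk I with hmkdef
  set z : MvPolynomial (Fin n ⊕ Fin n) A := C c * C f * ∏ i : Fin n, X (Sum.inr i) ^ kk i with hz
  -- phi of z
  have hkm' : ∀ i, r < m i + kk i := fun i => by have := hkm i; omega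
  have hphiz : phi 𝒜 t kk r z = c * f := by
    have hzmon : z = monomial (∑ i : Fin n, Finsupp.single (Sum.inr i) (kk i)) (c * f) := by
      rw [hz]
      simp_rw [X_pow_eq_monomial]
      rw [← monomial_sum_one, C_apply, C_apply, monomial_mul, monomial_mul]
      simp
    rw [hzmon, phi_monomial, sval]
    have hinl : ∀ j, (∑ i : Fin n, Finsupp.single (Sum.inr i) (kk i) :
        (Fin n ⊕ Fin n) →₀ ℕ) (Sum.inl j) = 0 := by
      intro j
      rw [Finsupp.finset_sum_apply]
      simp [Finsupp.single_apply]
    have hinr : ∀ j, (∑ i : Fin n, Finsupp.single (Sum.inr i) (kk i) :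
        (Fin n ⊕ Fin n) →₀ ℕ) (Sum.inr j) = kk j := by
      intro j
      rw [Finsupp.finset_sum_apply]
      simp [Finsupp.single_apply]
    rw [if_pos (fun j => by rw [hinl j, hinr j, zero_add])]
    simp only [hinl]
    have hcf : c * f ∈ 𝒜 r := by
      have := SetLike.mul_mem_graded hc hf
      rwa [zero_add] at this
    simp [projZ_of_mem 𝒜 (c * f) r hcf]
  constructor
  · intro h
    -- convert membership to existence of a lift
    have himg : ((Set.range fun i : Fin n => mk (X (Sum.inr i) ^ (m i + kk i))) ∪
        (Set.range fun i : Fin n => mk (X (Sum.inl i) ^ (m i + kk i))))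
        = mk '' ((Set.range fun i : Fin n =>
            (X (Sum.inr i) ^ (m i + kk i) : MvPolynomial (Fin n ⊕ Fin n) A)) ∪
          (Set.range fun i : Fin n => X (Sum.inl i) ^ (m i + kk i))) := by
      rw [Set.image_union, ← Set.range_comp, ← Set.range_comp]
      rfl
    rw [himg, ← Ideal.map_span] at h
    obtain ⟨y, hy, hyz⟩ := (Ideal.mem_map_iff_of_surjective _
      Ideal.Quotient.mk_surjective).mp h
    have hzyI : z - y ∈ I := by
      have := Ideal.Quotient.eq.mp hyz
      have h2 : z - y = -(y - z) := by ring
      rw [h2]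
      exact neg_mem this
    have key1 : ∀ w ∈ Ideal.span ((Set.range fun i : Fin n =>
          (X (Sum.inr i) ^ (m i + kk i) : MvPolynomial (Fin n ⊕ Fin n) A)) ∪
        (Set.range fun i : Fin n => X (Sum.inl i) ^ (m i + kk i))),
        ∀ P : MvPolynomial (Fin n ⊕ Fin n) A, phi 𝒜 t kk r (P * w) ∈
          Ideal.span (Set.range fun i : Fin n => t i ^ m i) := by
      intro w hw
      induction hw using Submodule.span_induction with
      | mem w hw =>
        rcases hw with ⟨i, rfl⟩ | ⟨i, rfl⟩
        · intro P; exact phi_mul_X_inr 𝒜 t kk m r P i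
        · intro P; rw [phi_mul_X_inl 𝒜 t kk m r P i (hkm' i)]; exact zero_mem _
      | zero => intro P; rw [mul_zero, phi_zero]; exact zero_mem _
      | add w₁ w₂ h₁ h₂ ih₁ ih₂ =>
        intro P; rw [mul_add, phi_add]; exact add_mem (ih₁ P) (ih₂ P)
      | smul q w hw ih =>
        intro P; rw [smul_eq_mul, ← mul_assoc]; exact ih (P * q)
    have key2 : ∀ w ∈ I, ∀ P : MvPolynomial (Fin n ⊕ Fin n) A,
        phi 𝒜 t kk r (P * w) = 0 := by
      intro w hw
      rw [hI] at hw
      induction hw using Submodule.span_induction with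
      | mem w hw =>
        rcases hw with ⟨i, rfl⟩
        intro P; exact phi_mul_rel 𝒜 t kk r ht P i
      | zero => intro P; rw [mul_zero, phi_zero]
      | add w₁ w₂ h₁ h₂ ih₁ ih₂ =>
        intro P; rw [mul_add, phi_add, ih₁ P, ih₂ P, add_zero]
      | smul q w hw ih =>
        intro P; rw [smul_eq_mul, ← mul_assoc]; exact ih (P * q)
    have h1 : phi 𝒜 t kk r y ∈ Ideal.span (Set.range fun i : Fin n => t i ^ m i) := by
      have := key1 y hy 1; rwa [one_mul] at this
    have h2 : phi 𝒜 t kk r (z - y) = 0 := by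
      have := key2 _ hzyI 1; rwa [one_mul] at this
    have hdec : z = y + (z - y) := by ring
    rw [← hphiz, hdec, phi_add, h2, add_zero]
    exact h1
  · intro h
    have h2 : mk (C (c * f)) ∈ Ideal.map ((mk : MvPolynomial (Fin n ⊕ Fin n) A →+* _).comp
        (C : A →+* MvPolynomial (Fin n ⊕ Fin n) A))
        (Ideal.span (Set.range fun i : Fin n => t i ^ m i)) :=
      Ideal.mem_map_of_mem _ h
    rw [Ideal.map_span, ← Set.range_comp] at h2
    have hrange : ((mk.comp C) ∘ fun i : Fin n => t i ^ m i)
        = fun i : Fin n => mk (C (t i ^ m i)) := rfl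
    rw [hrange] at h2
    have key3 : ∀ w ∈ Ideal.span (Set.range fun i : Fin n => mk (C (t i ^ m i))),
        w * mk (∏ j : Fin n, X (Sum.inr j) ^ kk j) ∈
          Ideal.span
            ((Set.range fun i : Fin n => mk (X (Sum.inr i) ^ (m i + kk i))) ∪
              (Set.range fun i : Fin n => mk (X (Sum.inl i) ^ (m i + kk i)))) := by
      intro w hw
      induction hw using Submodule.span_induction with
      | mem w hw =>
        rcases hw with ⟨i, rfl⟩
        have hmk : mk (X (Sum.inl i) * X (Sum.inr i)) = mk (C (t i)) :=
          Ideal.Quotient.eq.mpr (Ideal.subset_span ⟨i, rfl⟩)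
        have hpoly : ((X (Sum.inl i) * X (Sum.inr i)) ^ m i *
              ∏ j : Fin n, X (Sum.inr j) ^ kk j : MvPolynomial (Fin n ⊕ Fin n) A)
            = (X (Sum.inl i) ^ m i * ∏ j ∈ Finset.univ.erase i, X (Sum.inr j) ^ kk j) *
              X (Sum.inr i) ^ (m i + kk i) := by
          rw [← Finset.mul_prod_erase Finset.univ _ (Finset.mem_univ i), mul_pow, pow_add]
          ring
        have e1 : mk (C (t i ^ m i)) * mk (∏ j : Fin n, X (Sum.inr j) ^ kk j)
            = mk (X (Sum.inl i) ^ m i * ∏ j ∈ Finset.univ.erase i, X (Sum.inr j) ^ kk j) *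
              mk (X (Sum.inr i) ^ (m i + kk i)) := by
          rw [map_pow, map_pow, ← hmk, ← map_pow, ← map_mul, hpoly, map_mul]
        rw [e1]
        exact Ideal.mul_mem_left _ _ (Ideal.subset_span (Set.mem_union_left _ ⟨i, rfl⟩))
      | zero => rw [zero_mul]; exact zero_mem _
      | add w₁ w₂ h₁ h₂ ih₁ ih₂ => rw [add_mul]; exact add_mem ih₁ ih₂
      | smul q w hw ih =>
        rw [smul_eq_mul, mul_assoc]
        exact Ideal.mul_mem_left _ _ ih
    have := key3 _ h2
    have hzz : mk z = mk (C (c * f)) * mk (∏ j : Fin n, X (Sum.inr j) ^ kk j) := by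
      rw [← map_mul, hz, C_mul]
    rw [hzz]
    exact this
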